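/- Let M be a matroid on a finite linearly ordered ground set E and let ∅ = F'_ε ⊂ … ⊂ F'_0 = F_c = F_0 ⊂ … ⊂ F_ι = E be a filtration of M. Then this filtration is a connected filtration of M if and only if the product (∏_{k=1}^{ι} β(M(F_k)/F_{k−1})) · (∏_{k=1}^{ε} β*(M(F'_{k−1})/F'_k)) is nonzero, where β(N) is the number of uniactive internal bases of N and β*(N) is the number of uniactive external bases of N. -/

import Mathlib

open Matroid Set

namespace ActiveBij

variable {α : Type*}

/-- Deletion of a set of elements from a matroid. -/
def del (M : Matroid α) (D : Set α) : Matroid α := M ↾ (M.E \ D)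

/-- Contraction of a set of elements of a matroid. -/
def con (M : Matroid α) (C : Set α) : Matroid α := (del M✶ C)✶

/-- The minor `M(G)/F` : restriction to `G` followed by contraction of `F`. -/
def minor (M : Matroid α) (G F : Set α) : Matroid α := con (M ↾ G) F

/-- A circuit of a matroid : a minimal dependent set. -/
def Cct (M : Matroid α) (C : Set α) : Prop := Minimal M.Dep C

/-- A cocircuit of a matroid : a circuit of the dual. -/
def Cocct (M : Matroid α) (C : Set α) : Prop := Cct M✶ C

/-- The fundamental circuit of `e ∉ B` with respect to a base `B` :
the unique circuit contained in `B ∪ {e}`. -/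
def fundCct (M : Matroid α) (B : Set α) (e : α) : Set α :=
  ⋂₀ {C | Cct M C ∧ C ⊆ insert e B}

/-- The fundamental cocircuit of `b ∈ B` with respect to a base `B` :
the unique cocircuit contained in `(E \ B) ∪ {b}`. -/
def fundCocct (M : Matroid α) (B : Set α) (b : α) : Set α :=
  ⋂₀ {C | Cocct M C ∧ C ⊆ insert b (M.E \ B)}

/-- The set of internally active elements of a base `B` :
elements `b ∈ B` that are the minimum of their fundamental cocircuit. -/
def ActInt [LinearOrder α] (M : Matroid α) (B : Set α) : Set α :=
  {b ∈ B | IsLeast (fundCocct M B b) b}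

/-- The set of externally active elements of a base `B` :
elements `e ∈ M.E \ B` that are the minimum of their fundamental circuit. -/
def ActExt [LinearOrder α] (M : Matroid α) (B : Set α) : Set α :=
  {e ∈ M.E \ B | IsLeast (fundCct M B e) e}

/-- A uniactive internal base : internal activity `1` and external activity `0`. -/
def UIntBase [LinearOrder α] (M : Matroid α) (B : Set α) : Prop :=
  M.IsBase B ∧ (ActInt M B).ncard = 1 ∧ (ActExt M B).ncard = 0

/-- A uniactive external base : internal activity `0` and external activity `1`. -/
def UExtBase [LinearOrder α] (M : Matroid α) (B : Set α) : Prop :=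
  M.IsBase B ∧ (ActInt M B).ncard = 0 ∧ (ActExt M B).ncard = 1

/-- `β(M)` : the number of uniactive internal bases. -/
noncomputable def beta [LinearOrder α] (M : Matroid α) : ℕ :=
  {B : Set α | UIntBase M B}.ncard

/-- `β*(M)` : the number of uniactive external bases. -/
noncomputable def betaStar [LinearOrder α] (M : Matroid α) : ℕ :=
  {B : Set α | UExtBase M B}.ncard

/-- A connected matroid : any two elements of the ground set lie on a common circuit. -/
def Conn (M : Matroid α) : Prop :=
  M.E.Nonempty ∧ ∀ ⦃x y⦄, x ∈ M.E → y ∈ M.E →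
    (x = y ∨ ∃ C, Cct M C ∧ x ∈ C ∧ y ∈ C)

/-- A matroid consisting of a single loop. -/
def IsLoopMatroid (M : Matroid α) : Prop := ∃ e, M.E = {e} ∧ M.Dep {e}

/-- A matroid consisting of a single coloop (isthmus). -/
def IsColoopMatroid (M : Matroid α) : Prop := ∃ e, M.E = {e} ∧ M.Indep {e}

/-- A flat : a subset of the ground set whose complement is a union of cocircuits. -/
def IsFlat (M : Matroid α) (F : Set α) : Prop :=
  F ⊆ M.E ∧ ∃ S : Set (Set α), (∀ C ∈ S, Cocct M C) ∧ M.E \ F = ⋃₀ S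

/-- A dual-flat : a union of circuits. -/
def IsDualFlat (M : Matroid α) (F : Set α) : Prop :=
  ∃ S : Set (Set α), (∀ C ∈ S, Cct M C) ∧ F = ⋃₀ S

/-- A cyclic flat : both a flat and a dual-flat. -/
def IsCyclicFlat (M : Matroid α) (F : Set α) : Prop :=
  IsFlat M F ∧ IsDualFlat M F

/-- The data of a filtration : `∅ = F'_ε ⊂ ⋯ ⊂ F'_0 = F_c = F_0 ⊂ ⋯ ⊂ F_ι = E`. -/
structure Filtration (α : Type*) where
  ι : ℕ
  ε : ℕ
  F : Fin (ι + 1) → Set α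
  F' : Fin (ε + 1) → Set α

/-- The `k`-th internal minor `M(F_k)/F_{k-1}` induced by a filtration. -/
def intMinor (M : Matroid α) (f : Filtration α) (k : Fin f.ι) : Matroid α :=
  minor M (f.F k.succ) (f.F k.castSucc)

/-- The `k`-th external minor `M(F'_{k-1})/F'_k` induced by a filtration. -/
def extMinor (M : Matroid α) (f : Filtration α) (k : Fin f.ε) : Matroid α :=
  minor M (f.F' k.castSucc) (f.F' k.succ)

/-- The filtration property : strictly nested subsets from `∅` to `M.E` through `F_c`,
with the minima of the successive differences increasing on each side of `F_c`. -/
def IsFiltration [LinearOrder α] (M : Matroid α) (f : Filtration α) : Prop :=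
  f.F' (Fin.last f.ε) = ∅ ∧
  f.F' 0 = f.F 0 ∧
  f.F (Fin.last f.ι) = M.E ∧
  (∀ k : Fin f.ι, f.F k.castSucc ⊂ f.F k.succ) ∧
  (∀ k : Fin f.ε, f.F' k.succ ⊂ f.F' k.castSucc) ∧
  (∀ j k : Fin f.ι, j < k → ∀ a b : α,
    IsLeast (f.F j.succ \ f.F j.castSucc) a →
    IsLeast (f.F k.succ \ f.F k.castSucc) b → a < b) ∧
  (∀ j k : Fin f.ε, j < k → ∀ a b : α,
    IsLeast (f.F' j.castSucc \ f.F' j.succ) a →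
    IsLeast (f.F' k.castSucc \ f.F' k.succ) b → a < b)

/-- A connected filtration : a filtration all of whose induced internal minors are
connected and not single loops, and all of whose induced external minors are connected
and not single coloops. -/
def IsConnFiltration [LinearOrder α] (M : Matroid α) (f : Filtration α) : Prop :=
  IsFiltration M f ∧
  (∀ k : Fin f.ι, Conn (intMinor M f k) ∧ ¬ IsLoopMatroid (intMinor M f k)) ∧
  (∀ k : Fin f.ε, Conn (extMinor M f k) ∧ ¬ IsColoopMatroid (extMinor M f k))

/-- An active filtration of a base `B` : a filtration such that `B` induces a uniactive
internal base of each internal minor and a uniactive external base of each external minor. -/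
def IsActiveFiltration [LinearOrder α] (M : Matroid α) (B : Set α) (f : Filtration α) : Prop :=
  IsFiltration M f ∧
  (∀ k : Fin f.ι, UIntBase (intMinor M f k) (B ∩ (f.F k.succ \ f.F k.castSucc))) ∧
  (∀ k : Fin f.ε, UExtBase (extMinor M f k) (B ∩ (f.F' k.castSucc \ f.F' k.succ)))

/-- The subset `F(X)` attached to a base `B` and a set `X` of internally active elements :
`B ∩ F` is a base of `M(F)`, the activities of the induced bases of `M(F)` and `M/F`
split those of `B`, with `Int` of the contraction part equal to `X`. -/
def DecompSet [LinearOrder α] (M : Matroid α) (B X F : Set α) : Prop :=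
  F ⊆ M.E ∧
  (M ↾ F).IsBase (B ∩ F) ∧
  ActInt (M ↾ F) (B ∩ F) = ActInt M B \ X ∧
  ActExt (M ↾ F) (B ∩ F) = ActExt M B ∧
  ActInt (con M F) (B \ F) = X ∧
  ActExt (con M F) (B \ F) = ∅

/-- The dual of a filtration : complement every subset and exchange the two sides. -/
def dualFil (M : Matroid α) (f : Filtration α) : Filtration α :=
  ⟨f.ε, f.ι, fun k => M.E \ f.F' k, fun k => M.E \ f.F k⟩

/-- The set of subsets occurring in a filtration. -/
def termsOf (f : Filtration α) : Set (Set α) :=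
  {H | ∃ k, f.F k = H} ∪ {H | ∃ k, f.F' k = H}

end ActiveBij
namespace ActiveBij

variable {α : Type*} {M : Matroid α} {B C D I X Y : Set α} {e f x y z : α}

/-! ### Basic circuit facts -/

theorem Cct.dep (h : Cct M C) : M.Dep C := h.prop

theorem Cct.subset_ground (h : Cct M C) : C ⊆ M.E := h.prop.subset_ground

theorem Cct.nonempty (h : Cct M C) : C.Nonempty := h.prop.nonempty

theorem Cct.subset_eq (h : Cct M C) (hD : M.Dep D) (hDC : D ⊆ C) : D = C :=
  hDC.antisymm (h.2 hD hDC)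

theorem Cct.ssubset_indep (h : Cct M C) (hX : X ⊂ C) : M.Indep X := by
  by_contra hdep
  have hXE : X ⊆ M.E := hX.subset.trans h.subset_ground
  exact hX.ne (h.subset_eq (M.dep_of_not_indep hdep hXE) hX.subset)

theorem Cct.diff_singleton_indep (h : Cct M C) (he : e ∈ C) : M.Indep (C \ {e}) :=
  h.ssubset_indep (diff_singleton_ssubset.2 he)

theorem Cct.eq_of_subset (h : Cct M C) (h' : Cct M D) (hDC : D ⊆ C) : D = C :=
  h.subset_eq h'.dep hDC

/-- Every dependent set in a finite matroid contains a circuit. -/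
theorem exists_cct_subset [M.Finite] (hD : M.Dep D) : ∃ C, Cct M C ∧ C ⊆ D := by
  have hfin : D.Finite := M.set_finite D hD.subset_ground
  have hSfin : {X | X ⊆ D ∧ M.Dep X}.Finite :=
    hfin.finite_subsets.subset (fun X hX => hX.1)
  obtain ⟨C, hC, hmin⟩ := Set.Finite.exists_minimal hSfin ⟨D, subset_rfl, hD⟩
  refine ⟨C, ⟨hC.2, fun Y hY hYC => ?_⟩, hC.1⟩
  exact hmin ⟨hYC.trans hC.1, hY⟩ hYC

theorem indep_iff_no_cct [M.Finite] (hX : X ⊆ M.E) :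
    M.Indep X ↔ ∀ C, Cct M C → ¬C ⊆ X := by
  constructor
  · intro hI C hC hCX
    exact hC.dep.not_indep (hI.subset hCX)
  · intro h
    rw [← M.not_dep_iff hX]
    intro hdep
    obtain ⟨C, hC, hCX⟩ := exists_cct_subset hdep
    exact h C hC hCX

/-- An element in the closure of an independent set yields a circuit. -/
theorem exists_cct_of_indep_closure [M.Finite] (hI : M.Indep I) (heI : e ∉ I)
    (he : e ∈ M.closure I) : ∃ C, Cct M C ∧ e ∈ C ∧ C ⊆ insert e I := by
  have hdep : M.Dep (insert e I) := hI.insert_dep_iff.2 ⟨he, heI⟩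
  obtain ⟨C, hC, hCsub⟩ := exists_cct_subset hdep
  refine ⟨C, hC, ?_, hCsub⟩
  by_contra heC
  exact hC.dep.not_indep (hI.subset (by
    intro x hx
    rcases hCsub hx with h | h
    · exact absurd (h ▸ hx) heC
    · exact h))

/-- An element in the closure of any set (not in the set) yields a circuit. -/
theorem exists_cct_of_mem_closure [M.Finite] (hX : X ⊆ M.E) (heX : e ∉ X)
    (he : e ∈ M.closure X) : ∃ C, Cct M C ∧ e ∈ C ∧ C ⊆ insert e X := by
  obtain ⟨I, hI⟩ := M.exists_isBasis X hX
  have heI : e ∉ I := fun h => heX (hI.subset h)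
  have he' : e ∈ M.closure I := by rwa [hI.closure_eq_closure]
  obtain ⟨C, hC, heC, hCsub⟩ := exists_cct_of_indep_closure hI.indep heI he'
  exact ⟨C, hC, heC, hCsub.trans (insert_subset_insert hI.subset)⟩

theorem Cct.mem_closure_diff_singleton (h : Cct M C) (he : e ∈ C) :
    e ∈ M.closure (C \ {e}) := by
  have hI : M.Indep (C \ {e}) := h.diff_singleton_indep he
  have hdep : M.Dep (insert e (C \ {e})) := by
    rw [insert_diff_singleton, insert_eq_of_mem he]; exact h.dep
  exact (hI.insert_dep_iff.1 hdep).1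

/-- Weak circuit elimination. -/
theorem cct_elim [M.Finite] {C₁ C₂ : Set α} (h₁ : Cct M C₁) (h₂ : Cct M C₂)
    (hne : C₁ ≠ C₂) (he : e ∈ C₁ ∩ C₂) : M.Dep ((C₁ ∪ C₂) \ {e}) := by
  set D := (C₁ ∪ C₂) \ {e} with hD
  have hDE : D ⊆ M.E := diff_subset.trans (union_subset h₁.subset_ground h₂.subset_ground)
  rw [← M.not_indep_iff hDE]
  intro hind
  obtain ⟨f, hf2, hf1⟩ : ∃ f, f ∈ C₂ ∧ f ∉ C₁ := by
    by_contra hcon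
    push_neg at hcon
    exact hne (h₁.eq_of_subset h₂ hcon).symm
  have hfe : f ≠ e := fun h => hf1 (h ▸ he.1)
  have hfD : f ∈ D := ⟨Or.inr hf2, hfe⟩
  set J := D \ {f} with hJ
  have hJind : M.Indep J := hind.subset diff_subset
  have hC1J : C₁ \ {e} ⊆ J := by
    intro x hx
    exact ⟨⟨Or.inl hx.1, hx.2⟩, fun h => hf1 (h ▸ hx.1)⟩
  have heJ : e ∈ M.closure J :=
    M.closure_subset_closure hC1J (h₁.mem_closure_diff_singleton he.1)
  have hC2f : C₂ \ {f} ⊆ insert e J := by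
    intro x hx
    rcases eq_or_ne x e with rfl | hxe
    · exact mem_insert _ _
    · exact Or.inr ⟨⟨Or.inr hx.1, hxe⟩, hx.2⟩
  have hfcl : f ∈ M.closure J := by
    have h1 : f ∈ M.closure (C₂ \ {f}) := h₂.mem_closure_diff_singleton hf2
    have h2 : f ∈ M.closure (insert e J) := M.closure_subset_closure hC2f h1
    rwa [Matroid.closure_insert_eq_of_mem_closure heJ] at h2
  have hfJ : f ∉ J := fun h => h.2 rfl
  have : M.Dep (insert f J) := hJind.insert_dep_iff.2 ⟨hfcl, hfJ⟩
  rw [hJ, insert_diff_singleton, insert_eq_of_mem hfD] at this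
  exact this.not_indep hind

/-- Strong circuit elimination. -/
theorem cct_strong_elim [M.Finite] {C₁ C₂ : Set α} (h₁ : Cct M C₁) (h₂ : Cct M C₂)
    (he : e ∈ C₁ ∩ C₂) (hf : f ∈ C₁ \ C₂) :
    ∃ C, Cct M C ∧ f ∈ C ∧ C ⊆ (C₁ ∪ C₂) \ {e} := by
  set D := (C₁ ∪ C₂) \ {e} with hD
  have hfe : f ≠ e := fun h => hf.2 (h ▸ he.2)
  have hfD : f ∈ D := ⟨Or.inl hf.1, hfe⟩
  set X := D \ {f} with hX
  have hXE : X ⊆ M.E :=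
    diff_subset.trans (diff_subset.trans (union_subset h₁.subset_ground h₂.subset_ground))
  have hC2X : C₂ \ {e} ⊆ X := by
    intro x hx
    exact ⟨⟨Or.inr hx.1, hx.2⟩, fun h => hf.2 (h ▸ hx.1)⟩
  have heX : e ∈ M.closure X :=
    M.closure_subset_closure hC2X (h₂.mem_closure_diff_singleton he.2)
  have hC1f : C₁ \ {f} ⊆ insert e X := by
    intro x hx
    rcases eq_or_ne x e with rfl | hxe
    · exact mem_insert _ _
    · exact Or.inr ⟨⟨Or.inl hx.1, hxe⟩, hx.2⟩
  have hfX : f ∉ X := fun h => h.2 rfl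
  have hfcl : f ∈ M.closure X := by
    have h1 : f ∈ M.closure (C₁ \ {f}) := h₁.mem_closure_diff_singleton hf.1
    have h2 : f ∈ M.closure (insert e X) := M.closure_subset_closure hC1f h1
    rwa [Matroid.closure_insert_eq_of_mem_closure heX] at h2
  obtain ⟨C, hC, hfC, hCsub⟩ := exists_cct_of_mem_closure hXE hfX hfcl
  have hXD : insert f X = D := by rw [hX, insert_diff_singleton, insert_eq_of_mem hfD]
  exact ⟨C, hC, hfC, hCsub.trans hXD.subset⟩

end ActiveBij
namespace ActiveBij

variable {α : Type*} {M : Matroid α} {A B C D I X Y : Set α} {e f x y z : α}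

/-- Engine for transitivity of the circuit-connection relation. -/
theorem cct_connect_aux [M.Finite] {C₂ : Set α} (h₂ : Cct M C₂) (hz : z ∈ C₂) :
    ∀ n C, (C \ C₂).ncard = n → Cct M C → x ∈ C → (C ∩ C₂).Nonempty →
    ∃ C', Cct M C' ∧ x ∈ C' ∧ z ∈ C' := by
  intro n
  induction n using Nat.strong_induction_on with
  | _ n IH =>
    intro C hcard hC hx hmeet
    by_cases hxC2 : x ∈ C₂
    · exact ⟨C₂, h₂, hxC2, hz⟩
    by_cases hzC : z ∈ C
    · exact ⟨C, hC, hx, hzC⟩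
    obtain ⟨y', hy'⟩ := hmeet
    obtain ⟨C'', hC'', hzC'', hsub''⟩ := cct_strong_elim h₂ hC ⟨hy'.2, hy'.1⟩ ⟨hz, hzC⟩
    by_cases hxC'' : x ∈ C''
    · exact ⟨C'', hC'', hxC'', hzC''⟩
    obtain ⟨u, huC'', huC, huC2⟩ : ∃ u, u ∈ C'' ∧ u ∈ C ∧ u ∉ C₂ := by
      by_contra hcon
      push_neg at hcon
      have hsub : C'' ⊆ C₂ \ {y'} := by
        intro w hw
        obtain ⟨hw1, hw2⟩ := hsub'' hw
        rcases hw1 with h | h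
        · exact ⟨h, hw2⟩
        · exact ⟨hcon w hw h, hw2⟩
      exact (h₂.ssubset_indep
        (hsub.trans_ssubset (diff_singleton_ssubset.2 hy'.2))).not_dep hC''.dep
    obtain ⟨C₃, hC₃, hxC₃, hsub₃⟩ := cct_strong_elim hC hC'' ⟨huC, huC''⟩ ⟨hx, hxC''⟩
    have hkey : ∀ w ∈ C₃, w ∉ C₂ → w ∈ C ∧ w ≠ u := by
      intro w hw hwC2
      obtain ⟨hw1, hw2⟩ := hsub₃ hw
      refine ⟨?_, hw2⟩
      rcases hw1 with h | h
      · exact h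
      · obtain ⟨hw3, _⟩ := hsub'' h
        rcases hw3 with h' | h'
        · exact absurd h' hwC2
        · exact h'
    have hmeet₃ : (C₃ ∩ C₂).Nonempty := by
      by_contra hemp
      rw [not_nonempty_iff_eq_empty] at hemp
      have hsub : C₃ ⊆ C \ {u} := by
        intro w hw
        have hwC2 : w ∉ C₂ := fun h => (eq_empty_iff_forall_notMem.1 hemp w) ⟨hw, h⟩
        exact hkey w hw hwC2
      exact (hC.ssubset_indep
        (hsub.trans_ssubset (diff_singleton_ssubset.2 huC))).not_dep hC₃.dep
    have hsubm : C₃ \ C₂ ⊆ (C \ C₂) \ {u} := by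
      intro w hw
      obtain ⟨h1, h2⟩ := hkey w hw.1 hw.2
      exact ⟨⟨h1, hw.2⟩, h2⟩
    have hfin : (C \ C₂).Finite := (M.set_finite C hC.subset_ground).diff
    have hlt : (C₃ \ C₂).ncard < n := by
      rw [← hcard]
      exact lt_of_le_of_lt (Set.ncard_le_ncard hsubm (hfin.diff))
        (Set.ncard_diff_singleton_lt_of_mem ⟨huC, huC2⟩ hfin)
    exact IH _ hlt C₃ rfl hC₃ hxC₃ hmeet₃

theorem cct_trans [M.Finite] (hxy : ∃ C, Cct M C ∧ x ∈ C ∧ y ∈ C)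
    (hyz : ∃ C, Cct M C ∧ y ∈ C ∧ z ∈ C) : ∃ C, Cct M C ∧ x ∈ C ∧ z ∈ C := by
  obtain ⟨C₁, hC₁, hx1, hy1⟩ := hxy
  obtain ⟨C₂, hC₂, hy2, hz2⟩ := hyz
  exact cct_connect_aux hC₂ hz2 _ C₁ rfl hC₁ hx1 ⟨y, hy1, hy2⟩

/-! ### Separators -/

/-- A separator : a subset of the ground set such that every circuit lies inside it
or inside its complement. -/
def Sep (M : Matroid α) (A : Set α) : Prop :=
  A ⊆ M.E ∧ ∀ ⦃C⦄, Cct M C → C ⊆ A ∨ C ⊆ M.E \ A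

theorem Sep.compl (h : Sep M A) : Sep M (M.E \ A) := by
  refine ⟨diff_subset, fun C hC => ?_⟩
  rw [diff_diff_cancel_left h.1]
  exact (h.2 hC).symm

theorem Sep.base_mix [M.Finite] (hA : Sep M A) (hB : M.IsBase B) (hB' : M.IsBase B') :
    M.IsBase ((B ∩ A) ∪ (B' \ A)) := by
  set X := (B ∩ A) ∪ (B' \ A) with hXdef
  have hXE : X ⊆ M.E :=
    union_subset ((inter_subset_left).trans hB.subset_ground)
      ((diff_subset).trans hB'.subset_ground)
  have hXA : X ∩ A ⊆ B := by
    rintro w ⟨hw, hwA⟩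
    rcases hw with h | h
    · exact h.1
    · exact absurd hwA h.2
  have hXcA : X ∩ (M.E \ A) ⊆ B' := by
    rintro w ⟨hw, hwA⟩
    rcases hw with h | h
    · exact absurd h.2 hwA.2
    · exact h.1
  have hXind : M.Indep X := by
    rw [← M.not_dep_iff hXE]
    intro hdep
    obtain ⟨C, hC, hCX⟩ := exists_cct_subset hdep
    rcases hA.2 hC with h | h
    · exact (hB.indep.subset (subset_inter hCX h |>.trans hXA)).not_dep hC.dep
    · exact (hB'.indep.subset (subset_inter hCX h |>.trans hXcA)).not_dep hC.dep
  refine hXind.isBase_of_maximal fun J hJ hXJ => ?_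
  refine hXJ.antisymm fun z hzJ => ?_
  by_contra hzX
  have hzE : z ∈ M.E := hJ.subset_ground hzJ
  by_cases hzA : z ∈ A
  · have hzB : z ∉ B := fun h => hzX (Or.inl ⟨h, hzA⟩)
    obtain ⟨C, hC, hCsub⟩ := exists_cct_subset (hB.insert_dep ⟨hzE, hzB⟩)
    have hzC : z ∈ C := by
      by_contra hzC
      exact (hB.indep.subset fun w hw => ((hCsub hw).resolve_left
        (fun h => hzC (h ▸ hw)))).not_dep hC.dep
    rcases hA.2 hC with h | h
    · have : C ⊆ insert z X := by
        intro w hw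
        rcases hCsub hw with rfl | hwB
        · exact mem_insert _ _
        · exact Or.inr (Or.inl ⟨hwB, h hw⟩)
      exact ((hJ.subset (this.trans (insert_subset hzJ hXJ))).not_dep hC.dep).elim
    · exact (h hzC).2 hzA
  · have hzB' : z ∉ B' := fun h => hzX (Or.inr ⟨h, hzA⟩)
    obtain ⟨C, hC, hCsub⟩ := exists_cct_subset (hB'.insert_dep ⟨hzE, hzB'⟩)
    have hzC : z ∈ C := by
      by_contra hzC
      exact (hB'.indep.subset fun w hw => ((hCsub hw).resolve_left
        (fun h => hzC (h ▸ hw)))).not_dep hC.dep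
    rcases hA.2 hC with h | h
    · exact hzA (h hzC)
    · have : C ⊆ insert z X := by
        intro w hw
        rcases hCsub hw with rfl | hwB'
        · exact mem_insert _ _
        · exact Or.inr (Or.inr ⟨hwB', (h hw).2⟩)
      exact ((hJ.subset (this.trans (insert_subset hzJ hXJ))).not_dep hC.dep).elim

theorem Sep.dual [M.Finite] (hA : Sep M A) : Sep M✶ A := by
  refine ⟨hA.1, fun C hC => ?_⟩
  by_contra hcon
  push_neg at hcon
  obtain ⟨hnA, hncA⟩ := hcon
  have hCE : C ⊆ M.E := hC.subset_ground
  obtain ⟨a, haC, haA⟩ : ∃ a ∈ C, a ∉ A := not_subset.1 hnA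
  obtain ⟨b, hbC, hbA⟩ : ∃ b ∈ C, b ∈ A := by
    obtain ⟨b, hbC, hb⟩ := not_subset.1 hncA
    exact ⟨b, hbC, by_contra fun h => hb ⟨hCE hbC, h⟩⟩
  have h1 : M✶.Indep (C ∩ A) :=
    hC.ssubset_indep (ssubset_of_subset_of_ne inter_subset_left
      (fun h => haA (by rw [← h] at haC; exact haC.2)))
  have h2 : M✶.Indep (C \ A) :=
    hC.ssubset_indep (ssubset_of_subset_of_ne diff_subset
      (fun h => (by rw [← h] at hbC; exact hbC.2 hbA : False)))
  obtain ⟨-, B, hB, hdisj⟩ := (Matroid.dual_indep_iff_exists' (M := M)).1 h1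
  obtain ⟨-, B', hB', hdisj'⟩ := (Matroid.dual_indep_iff_exists' (M := M)).1 h2
  have hX : M.IsBase ((B ∩ A) ∪ (B' \ A)) := hA.base_mix hB hB'
  have hXdual : M✶.Indep (M.E \ ((B ∩ A) ∪ (B' \ A))) := hX.compl_isBase_dual.indep
  have hCsub : ¬ C ⊆ M.E \ ((B ∩ A) ∪ (B' \ A)) :=
    fun h => (hXdual.subset h).not_dep hC.dep
  obtain ⟨c, hcC, hc⟩ := not_subset.1 hCsub
  have hcX : c ∈ (B ∩ A) ∪ (B' \ A) := by
    by_contra h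
    exact hc ⟨hCE hcC, h⟩
  rcases hcX with h | h
  · exact hdisj.ne_of_mem ⟨hcC, h.2⟩ h.1 rfl
  · exact hdisj'.ne_of_mem ⟨hcC, fun h' => h.2 h'⟩ h.1 rfl

theorem rtg_collapse [M.Finite] {x y : α}
    (h : Relation.ReflTransGen (fun a b => ∃ C, Cct M C ∧ a ∈ C ∧ b ∈ C) x y) :
    x = y ∨ ∃ C, Cct M C ∧ x ∈ C ∧ y ∈ C := by
  induction h with
  | refl => exact Or.inl rfl
  | tail hab hr IH =>
    rcases IH with rfl | hC1
    · exact Or.inr hr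
    · exact Or.inr (cct_trans hC1 hr)

theorem conn_iff_sep [M.Finite] :
    Conn M ↔ M.E.Nonempty ∧ ∀ A, Sep M A → A = ∅ ∨ A = M.E := by
  constructor
  · rintro ⟨hne, hconn⟩
    refine ⟨hne, fun A hA => ?_⟩
    by_contra hcon
    push_neg at hcon
    obtain ⟨hA0, hAE⟩ := hcon
    obtain ⟨x, hx⟩ := hA0
    obtain ⟨y, hyE, hyA⟩ : ∃ y ∈ M.E, y ∉ A := by
      by_contra h
      push_neg at h
      exact hAE (hA.1.antisymm h)
    rcases hconn (hA.1 hx) hyE with rfl | ⟨C, hC, hxC, hyC⟩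
    · exact hyA hx
    rcases hA.2 hC with h | h
    · exact hyA (h hyC)
    · exact (h hxC).2 hx
  · rintro ⟨hne, hsep⟩
    refine ⟨hne, fun x y hx hy => ?_⟩
    set r : α → α → Prop := fun a b => ∃ C, Cct M C ∧ a ∈ C ∧ b ∈ C with hr
    set A := {w ∈ M.E | Relation.ReflTransGen r x w} with hAdef
    have hA : Sep M A := by
      refine ⟨fun w hw => hw.1, fun C hC => ?_⟩
      by_cases hmeet : (C ∩ A).Nonempty
      · obtain ⟨w, hwC, hwA⟩ := hmeet
        exact Or.inl fun c hc =>
          ⟨hC.subset_ground hc, hwA.2.tail ⟨C, hC, hwC, hc⟩⟩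
      · exact Or.inr fun c hc =>
          ⟨hC.subset_ground hc, fun hcA => hmeet ⟨c, hc, hcA⟩⟩
    have hxA : x ∈ A := ⟨hx, Relation.ReflTransGen.refl⟩
    rcases hsep A hA with h | h
    · exact absurd (h ▸ hxA) (notMem_empty x)
    · have hyA : y ∈ A := h ▸ hy
      exact rtg_collapse hyA.2
theorem sep_of_dual [M.Finite] (hA : Sep M✶ A) : Sep M A := by
  have := hA.dual
  rwa [Matroid.dual_dual] at this

theorem conn_dual [M.Finite] : Conn M✶ ↔ Conn M := by
  rw [conn_iff_sep, conn_iff_sep, Matroid.dual_ground]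
  exact and_congr_right fun _ =>
    ⟨fun h A hA => by simpa using h A hA.dual,
     fun h A hA => by simpa using h A (sep_of_dual hA)⟩

end ActiveBij
namespace ActiveBij

variable {α : Type*} {M : Matroid α} {A B C D I X Y : Set α} {b e f m x y z : α}

/-! ### Fundamental circuits -/

theorem cct_mem_of_subset_insert_base (hB : M.IsBase B) (hC : Cct M C)
    (hsub : C ⊆ insert e B) : e ∈ C := by
  by_contra heC
  exact (hB.indep.subset fun w hw =>
    ((hsub hw).resolve_left (fun h => heC (h ▸ hw)))).not_dep hC.dep

theorem exists_fund_cct [M.Finite] (hB : M.IsBase B) (heE : e ∈ M.E) (heB : e ∉ B) :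
    ∃ C, Cct M C ∧ C ⊆ insert e B := by
  obtain ⟨C, hC, hsub⟩ := exists_cct_subset (hB.insert_dep ⟨heE, heB⟩)
  exact ⟨C, hC, hsub⟩

theorem fund_cct_unique [M.Finite] (hB : M.IsBase B) (heB : e ∉ B) {C C' : Set α}
    (hC : Cct M C) (hsub : C ⊆ insert e B) (hC' : Cct M C') (hsub' : C' ⊆ insert e B) :
    C = C' := by
  by_contra hne
  have heC : e ∈ C := cct_mem_of_subset_insert_base hB hC hsub
  have heC' : e ∈ C' := cct_mem_of_subset_insert_base hB hC' hsub'
  have hdep := cct_elim hC hC' hne ⟨heC, heC'⟩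
  refine (hB.indep.subset ?_).not_dep hdep
  intro w hw
  rcases hw.1 with h | h
  · exact (hsub h).resolve_left hw.2
  · exact (hsub' h).resolve_left hw.2

theorem fundCct_spec [M.Finite] (hB : M.IsBase B) (heE : e ∈ M.E) (heB : e ∉ B) :
    Cct M (fundCct M B e) ∧ e ∈ fundCct M B e ∧ fundCct M B e ⊆ insert e B := by
  obtain ⟨C, hC, hsub⟩ := exists_fund_cct hB heE heB
  have hset : {C' | Cct M C' ∧ C' ⊆ insert e B} = {C} := by
    ext C'
    simp only [mem_setOf_eq, mem_singleton_iff]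
    exact ⟨fun h => fund_cct_unique hB heB h.1 h.2 hC hsub,
      fun h => h ▸ ⟨hC, hsub⟩⟩
  have : fundCct M B e = C := by rw [fundCct, hset, sInter_singleton]
  rw [this]
  exact ⟨hC, cct_mem_of_subset_insert_base hB hC hsub, hsub⟩

theorem fundCct_eq_of_cct [M.Finite] (hB : M.IsBase B) (heB : e ∉ B)
    (hC : Cct M C) (hsub : C ⊆ insert e B) : fundCct M B e = C := by
  have heE : e ∈ M.E := hC.subset_ground (cct_mem_of_subset_insert_base hB hC hsub)
  exact fund_cct_unique hB heB (fundCct_spec hB heE heB).1 (fundCct_spec hB heE heB).2.2 hC hsub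

/-! ### Duality bridges -/

theorem fundCocct_eq_dual (M : Matroid α) (B : Set α) (b : α) :
    fundCocct M B b = fundCct M✶ (M.E \ B) b := rfl

theorem fundCct_eq_dual (M : Matroid α) (hB : B ⊆ M.E) (b : α) :
    fundCct M B b = fundCocct M✶ (M.E \ B) b := by
  have hset : {C | Cocct M✶ C ∧ C ⊆ insert b (M✶.E \ (M.E \ B))} =
      {C | Cct M C ∧ C ⊆ insert b B} := by
    ext C
    simp only [mem_setOf_eq, Cocct, Matroid.dual_dual, Matroid.dual_ground,
      diff_diff_cancel_left hB]
  rw [fundCct, fundCocct, hset]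

/-! ### Fundamental cocircuits -/

theorem fundCocct_spec [M.Finite] (hB : M.IsBase B) (hbB : b ∈ B) :
    Cocct M (fundCocct M B b) ∧ b ∈ fundCocct M B b ∧
      fundCocct M B b ⊆ insert b (M.E \ B) := by
  have hB' : M✶.IsBase (M.E \ B) := hB.compl_isBase_dual
  have hbE : b ∈ M✶.E := hB.subset_ground hbB
  have hbB' : b ∉ M.E \ B := fun h => h.2 hbB
  have := fundCct_spec hB' hbE hbB'
  rw [fundCocct_eq_dual]
  exact this

theorem fundCocct_eq_of_cocct [M.Finite] (hB : M.IsBase B) (hbB : b ∈ B)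
    (hC : Cocct M C) (hsub : C ⊆ insert b (M.E \ B)) : fundCocct M B b = C := by
  have hB' : M✶.IsBase (M.E \ B) := hB.compl_isBase_dual
  have hbB' : b ∉ M.E \ B := fun h => h.2 hbB
  rw [fundCocct_eq_dual]
  exact fundCct_eq_of_cct hB' hbB' hC hsub

theorem actInt_subset (M : Matroid α) [LinearOrder α] (B : Set α) : ActInt M B ⊆ B :=
  fun _ h => h.1

theorem actExt_subset (M : Matroid α) [LinearOrder α] (B : Set α) :
    ActExt M B ⊆ M.E \ B := fun _ h => h.1

section LO
variable [LinearOrder α]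

theorem actInt_eq_dual (M : Matroid α) (hB : B ⊆ M.E) :
    ActInt M B = ActExt M✶ (M.E \ B) := by
  ext w
  simp only [ActInt, ActExt, mem_setOf_eq, Matroid.dual_ground,
    diff_diff_cancel_left hB, fundCocct_eq_dual]

theorem actExt_eq_dual (M : Matroid α) (hB : B ⊆ M.E) :
    ActExt M B = ActInt M✶ (M.E \ B) := by
  ext w
  simp only [ActExt, ActInt, mem_setOf_eq, fundCct_eq_dual M hB]

theorem least_mem_actInt [M.Finite] (hB : M.IsBase B) (hmB : m ∈ B)
    (hmin : ∀ w ∈ M.E, m ≤ w) : m ∈ ActInt M B := by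
  obtain ⟨hC, hmC, -⟩ := fundCocct_spec hB hmB
  exact ⟨hmB, hmC, fun w hw => hmin w (hC.subset_ground hw)⟩

theorem least_mem_actExt [M.Finite] (hB : M.IsBase B) (hmE : m ∈ M.E) (hmB : m ∉ B)
    (hmin : ∀ w ∈ M.E, m ≤ w) : m ∈ ActExt M B := by
  obtain ⟨hC, hmC, -⟩ := fundCct_spec hB hmE hmB
  exact ⟨⟨hmE, hmB⟩, hmC, fun w hw => hmin w (hC.subset_ground hw)⟩

/-- A uniactive internal base certifies connectivity. -/
theorem uIntBase_conn [M.Finite] (h : UIntBase M B) : Conn M ∧ ¬ IsLoopMatroid M := by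
  obtain ⟨hB, hInt, hExt⟩ := h
  have hBE : B ⊆ M.E := hB.subset_ground
  have hEfin : M.E.Finite := M.ground_finite
  have hExtFin : (ActExt M B).Finite := hEfin.subset ((actExt_subset M B).trans diff_subset)
  have hExt0 : ActExt M B = ∅ := (Set.ncard_eq_zero hExtFin).1 hExt
  obtain ⟨a, ha⟩ := Set.ncard_eq_one.1 hInt
  have haB : a ∈ B := actInt_subset M B (ha ▸ rfl)
  have hne : M.E.Nonempty := ⟨a, hBE haB⟩
  have hnl : ¬ IsLoopMatroid M := by
    rintro ⟨v, hvE, hvdep⟩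
    have hBv : B ⊆ {v} := hvE ▸ hBE
    rcases subset_singleton_iff_eq.1 hBv with h0 | h1
    · exact absurd (h0 ▸ haB) (notMem_empty a)
    · exact hvdep.not_indep (h1 ▸ hB.indep)
  refine ⟨conn_iff_sep.2 ⟨hne, fun A hA => ?_⟩, hnl⟩
  by_contra hcon
  have hA0 : A ≠ ∅ := fun h => hcon (Or.inl h)
  have hAE : A ≠ M.E := fun h => hcon (Or.inr h)
  obtain ⟨m, hmE, hmmin⟩ := Set.exists_min_image M.E id hEfin hne
  have key : ∀ A' : Set α, Sep M A' → A'.Nonempty → m ∉ A' → False := by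
    intro A' hA' hne' hmA'
    have hA'fin : A'.Finite := hEfin.subset hA'.1
    obtain ⟨m', hm'A', hm'min⟩ := Set.exists_min_image A' id hA'fin hne'
    have hm'E : m' ∈ M.E := hA'.1 hm'A'
    have hmB : m ∈ B := by
      by_contra hmB
      exact absurd (least_mem_actExt hB hmE hmB hmmin) (hExt0 ▸ notMem_empty m)
    have hmInt : m = a := by
      have h' := least_mem_actInt hB hmB hmmin
      rw [ha] at h'
      exact h'
    by_cases hm'B : m' ∈ B
    · obtain ⟨hCo, hm'C, -⟩ := fundCocct_spec hB hm'B
      have hCsub : fundCocct M B m' ⊆ A' := by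
        rcases (hA'.dual).2 hCo with hss | hss
        · exact hss
        · exact absurd hm'A' (hss hm'C).2
      have hm'Int : m' ∈ ActInt M B := ⟨hm'B, hm'C, fun w hw => hm'min w (hCsub hw)⟩
      rw [ha] at hm'Int
      exact hmA' (hmInt ▸ hm'Int ▸ hm'A')
    · obtain ⟨hC, hm'C, -⟩ := fundCct_spec hB hm'E hm'B
      have hCsub : fundCct M B m' ⊆ A' := by
        rcases hA'.2 hC with hss | hss
        · exact hss
        · exact absurd hm'A' (hss hm'C).2
      have hm'Ext : m' ∈ ActExt M B := ⟨⟨hm'E, hm'B⟩, hm'C, fun w hw => hm'min w (hCsub hw)⟩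
      exact absurd hm'Ext (hExt0 ▸ notMem_empty m')
  by_cases hmA : m ∈ A
  · have hEA : (M.E \ A).Nonempty := by
      have hns : ¬ M.E ⊆ A := fun h => hAE (hA.1.antisymm h)
      obtain ⟨v, hvE, hvA⟩ := not_subset.1 hns
      exact ⟨v, hvE, hvA⟩
    exact key (M.E \ A) hA.compl hEA (fun h => h.2 hmA)
  · exact key A hA (Set.nonempty_iff_ne_empty.2 hA0) hmA

end LO
end ActiveBij
namespace ActiveBij

variable {α : Type*} {M : Matroid α} {A B C D I K R X Y : Set α} {b e f m x y z : α}

/-! ### Circuits of restrictions -/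

theorem restrict_dep_iff' (hR : R ⊆ M.E) : (M ↾ R).Dep D ↔ M.Dep D ∧ D ⊆ R := by
  rw [Matroid.restrict_dep_iff]
  exact ⟨fun h => ⟨⟨h.1, h.2.trans hR⟩, h.2⟩, fun h => ⟨h.1.1, h.2⟩⟩

theorem cct_restrict_iff (hR : R ⊆ M.E) : Cct (M ↾ R) C ↔ Cct M C ∧ C ⊆ R := by
  constructor
  · intro hC
    have hCR : C ⊆ R := hC.dep.subset_ground
    have hCdep : M.Dep C := ((restrict_dep_iff' hR).1 hC.dep).1
    refine ⟨⟨hCdep, fun D hD hDC => hC.2 ((restrict_dep_iff' hR).2 ⟨hD, hDC.trans hCR⟩) hDC⟩, hCR⟩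
  · rintro ⟨hC, hCR⟩
    refine ⟨(restrict_dep_iff' hR).2 ⟨hC.dep, hCR⟩, fun D hD hDC => ?_⟩
    exact hC.2 ((restrict_dep_iff' hR).1 hD).1 hDC

/-! ### Deletion of a non-coloop element -/

theorem mem_closure_compl_of_base_not_mem {B₀ : Set α} (hB₀ : M.IsBase B₀) (heB₀ : e ∉ B₀)
    (he : e ∈ M.E) : e ∈ M.closure (M.E \ {e}) := by
  have h1 : e ∈ M.closure B₀ := by rw [hB₀.closure_eq]; exact he
  have hsub : B₀ ⊆ M.E \ {e} :=
    fun w hw => ⟨hB₀.subset_ground hw, fun h => heB₀ (h ▸ hw)⟩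
  exact M.closure_subset_closure hsub h1

theorem exists_base_not_mem_of_closure (hecl : e ∈ M.closure (M.E \ {e})) :
    ∃ B₀, M.IsBase B₀ ∧ e ∉ B₀ := by
  obtain ⟨I, hI⟩ := M.exists_isBasis (M.E \ {e}) diff_subset
  have hIcl : M.E ⊆ M.closure I := by
    intro x hx
    rcases eq_or_ne x e with rfl | hxe
    · rwa [hI.closure_eq_closure]
    · exact hI.subset_closure ⟨hx, hxe⟩
  exact ⟨I, hI.indep.isBase_of_ground_subset_closure hIcl, fun h => (hI.subset h).2 rfl⟩

theorem base_del_iff (hecl : e ∈ M.closure (M.E \ {e})) :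
    (M ↾ (M.E \ {e})).IsBase B ↔ M.IsBase B ∧ e ∉ B := by
  rw [Matroid.isBase_restrict_iff diff_subset]
  constructor
  · intro hB
    have heB : e ∉ B := fun h => (hB.subset h).2 rfl
    have hcl : M.E ⊆ M.closure B := by
      intro x hx
      rcases eq_or_ne x e with rfl | hxe
      · rwa [hB.closure_eq_closure]
      · exact hB.subset_closure ⟨hx, hxe⟩
    exact ⟨hB.indep.isBase_of_ground_subset_closure hcl, heB⟩
  · rintro ⟨hB, heB⟩
    rw [Matroid.isBasis_iff_indep_closure]
    exact ⟨hB.indep, fun x hx => by rw [hB.closure_eq]; exact hx.1,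
      fun x hx => ⟨hB.subset_ground hx, fun h => heB (h ▸ hx)⟩⟩

/-! ### Contraction of a non-loop element -/

theorem con_ground (M : Matroid α) (C : Set α) : (con M C).E = M.E \ C := rfl

theorem dual_del_eq_con_dual (M : Matroid α) (e : α) :
    (M ↾ (M.E \ {e}))✶ = con M✶ {e} := by
  rw [con, Matroid.dual_dual, del]

theorem con_indep_iff (hnl : M.Indep {e}) (hK : K ⊆ M.E \ {e}) :
    (con M {e}).Indep K ↔ M.Indep (insert e K) := by
  have he : e ∈ M.E := hnl.subset_ground rfl
  have hecl' : e ∈ M✶.closure (M✶.E \ {e}) := by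
    obtain ⟨B₂, hB₂, heB₂⟩ := hnl.exists_isBase_superset
    exact mem_closure_compl_of_base_not_mem hB₂.compl_isBase_dual (fun h => h.2 (heB₂ rfl)) he
  rw [con, del, Matroid.dual_indep_iff_exists' ]
  constructor
  · rintro ⟨hKsub, B₁, hB₁, hdisj⟩
    rw [base_del_iff hecl'] at hB₁
    obtain ⟨hB₁, heB₁⟩ := hB₁
    have hB₂ : M.IsBase (M.E \ B₁) := hB₁.compl_isBase_of_dual
    refine hB₂.indep.subset (insert_subset ⟨he, heB₁⟩ fun w hw => ?_)
    show w ∈ M.E \ B₁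
    exact ⟨(hK hw).1, fun h => hdisj.ne_of_mem hw h rfl⟩
  · intro hind
    obtain ⟨B₂, hB₂, hsub₂⟩ := hind.exists_isBase_superset
    refine ⟨fun w hw => by rw [Matroid.dual_ground]; exact hK hw, M.E \ B₂, ?_, ?_⟩
    · rw [base_del_iff hecl']
      exact ⟨hB₂.compl_isBase_dual, fun h => h.2 (hsub₂ (mem_insert _ _))⟩
    · exact disjoint_left.2 fun w hw h => h.2 (hsub₂ (Or.inr hw))

theorem con_dep_iff (hnl : M.Indep {e}) :
    (con M {e}).Dep K ↔ K ⊆ M.E \ {e} ∧ M.Dep (insert e K) := by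
  have he : e ∈ M.E := hnl.subset_ground rfl
  constructor
  · intro h
    have hKsub : K ⊆ M.E \ {e} := h.subset_ground
    refine ⟨hKsub, ?_⟩
    rw [Matroid.dep_iff]
    refine ⟨fun hind => h.not_indep ((con_indep_iff hnl hKsub).2 hind), ?_⟩
    exact insert_subset he fun w hw => (hKsub hw).1
  · rintro ⟨hKsub, hdep⟩
    rw [Matroid.dep_iff]
    exact ⟨fun hind => hdep.not_indep ((con_indep_iff hnl hKsub).1 hind), hKsub⟩

theorem con_base_iff (hnl : M.Indep {e}) (hB' : B ⊆ M.E \ {e}) :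
    (con M {e}).IsBase B ↔ M.IsBase (insert e B) := by
  have heB : e ∉ B := fun h => (hB' h).2 rfl
  constructor
  · intro h
    refine ((con_indep_iff hnl hB').1 h.indep).isBase_of_maximal fun J hJ hsub => ?_
    have hJE : J ⊆ M.E := hJ.subset_ground
    have hJK : (con M {e}).Indep (J \ {e}) := by
      rw [con_indep_iff hnl (fun w hw => ⟨hJE hw.1, hw.2⟩), insert_diff_singleton,
        insert_eq_of_mem (hsub (mem_insert _ _))]
      exact hJ
    have hBJ : B ⊆ J \ {e} := fun w hw =>
      ⟨hsub (Or.inr hw), fun h => heB (h ▸ hw)⟩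
    have hBJ' := h.eq_of_subset_indep hJK hBJ
    rw [hBJ', insert_diff_singleton, insert_eq_of_mem (hsub (mem_insert _ _))]
  · intro h
    rw [Matroid.isBase_iff_maximal_indep]
    refine ⟨(con_indep_iff hnl hB').2 h.indep, fun K hK hBK => ?_⟩
    have hKsub : K ⊆ M.E \ {e} := hK.subset_ground
    have : insert e B = insert e K :=
      h.eq_of_subset_indep ((con_indep_iff hnl hKsub).1 hK)
        (insert_subset_insert hBK)
    have heK : e ∉ K := fun h => (hKsub h).2 rfl
    have hfin : B = K := by
      calc B = insert e B \ {e} := by rw [insert_diff_self_of_notMem heB]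
        _ = insert e K \ {e} := by rw [this]
        _ = K := by rw [insert_diff_self_of_notMem heK]
    exact hfin.ge

theorem con_cct_cases [M.Finite] (hnl : M.Indep {e}) (hK : Cct (con M {e}) K) :
    (Cct M K ∧ e ∉ K) ∨ (Cct M (insert e K) ∧ e ∉ K) := by
  have hKsub : K ⊆ M.E \ {e} := hK.dep.subset_ground
  have heK : e ∉ K := fun h => (hKsub h).2 rfl
  have hdep : M.Dep (insert e K) := ((con_dep_iff hnl).1 hK.dep).2
  obtain ⟨C, hC, hCsub⟩ := exists_cct_subset hdep
  by_cases heC : e ∈ C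
  · right
    have hCK : C \ {e} ⊆ K := fun w hw => ((hCsub hw.1).resolve_left hw.2)
    have hdepC : (con M {e}).Dep (C \ {e}) := by
      rw [con_dep_iff hnl]
      refine ⟨hCK.trans hKsub, ?_⟩
      rw [insert_diff_singleton, insert_eq_of_mem heC]
      exact hC.dep
    have hKC : K = C \ {e} := (hK.2 hdepC hCK).antisymm hCK
    rw [hKC, insert_diff_singleton, insert_eq_of_mem heC]
    exact ⟨hC, fun h => h.2 rfl⟩
  · left
    have hCK : C ⊆ K := fun w hw => ((hCsub hw).resolve_left (fun h => heC (h ▸ hw)))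
    have hdepC : (con M {e}).Dep C := by
      rw [con_dep_iff hnl]
      exact ⟨hCK.trans hKsub, hC.dep.superset (subset_insert e C)
        (insert_subset (hnl.subset_ground rfl) hC.subset_ground)⟩
    have hKC : K = C := (hK.2 hdepC hCK).antisymm hCK
    exact ⟨hKC ▸ hC, heK⟩

end ActiveBij
namespace ActiveBij

variable {α : Type*} {M : Matroid α} {A B C D I K R X Y : Set α} {b e f m w x y z : α}

section LO
variable [LinearOrder α]

theorem max_not_mem_actExt [M.Finite] (hB : M.IsBase B) (hmax : ∀ x ∈ M.E, x ≤ e)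
    (hnl : M.Indep {e}) : e ∉ ActExt M B := by
  rintro ⟨⟨heE, heB⟩, hmem, hlb⟩
  obtain ⟨hC, heC, -⟩ := fundCct_spec hB heE heB
  obtain ⟨g, hgC, hge⟩ : ∃ g ∈ fundCct M B e, g ≠ e := by
    by_contra h
    push_neg at h
    have hsing : fundCct M B e = {e} :=
      (subset_singleton_iff.2 h).antisymm (singleton_subset_iff.2 heC)
    exact (hnl.subset hsing.le).not_dep hC.dep
  exact hge ((hmax g (hC.subset_ground hgC)).antisymm (hlb hgC))

/-- Deleting the maximum element (non-loop, non-coloop) preserves bases not containing it,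
together with their activities. -/
theorem del_acts [M.Finite] (hmax : ∀ x ∈ M.E, x ≤ e) (hnl : M.Indep {e})
    {B₀ : Set α} (hB₀ : M.IsBase B₀) (heB₀ : e ∉ B₀)
    (hBdel : (M ↾ (M.E \ {e})).IsBase B) :
    M.IsBase B ∧ e ∉ B ∧ ActInt (M ↾ (M.E \ {e})) B = ActInt M B
      ∧ ActExt (M ↾ (M.E \ {e})) B = ActExt M B := by
  have he : e ∈ M.E := hnl.subset_ground rfl
  have hecl := mem_closure_compl_of_base_not_mem hB₀ heB₀ he
  haveI hNfin : (M ↾ (M.E \ {e})).Finite := Matroid.restrict_finite (M.ground_finite.diff)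
  obtain ⟨hBM, heB⟩ := (base_del_iff hecl).1 hBdel
  have hnl' : M✶.Indep {e} := by
    rw [Matroid.dual_indep_iff_exists (singleton_subset_iff.2 he)]
    exact ⟨B₀, hB₀, disjoint_singleton_left.2 heB₀⟩
  have hwin : ((M ↾ (M.E \ {e})).E \ B) ⊆ M.E \ B := fun v hv => ⟨hv.1.1, hv.2⟩
  refine ⟨hBM, heB, ?_, ?_⟩
  · ext b
    simp only [ActInt, mem_setOf_eq]
    refine and_congr_right fun hbB => ?_
    have hbE : b ∈ M.E := hBM.subset_ground hbB
    obtain ⟨hCo, hbC, hCsub⟩ := fundCocct_spec hBdel hbB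
    have hNdual : Cct (con M✶ {e}) (fundCocct (M ↾ (M.E \ {e})) B b) := by
      rw [← dual_del_eq_con_dual]; exact hCo
    rcases con_cct_cases hnl' hNdual with ⟨hD, heD⟩ | ⟨hD, heD⟩
    · have heq : fundCocct M B b = fundCocct (M ↾ (M.E \ {e})) B b :=
        fundCocct_eq_of_cocct hBM hbB hD (hCsub.trans (insert_subset_insert hwin))
      rw [heq]
    · have heq : fundCocct M B b = insert e (fundCocct (M ↾ (M.E \ {e})) B b) :=
        fundCocct_eq_of_cocct hBM hbB hD
          (insert_subset (Or.inr ⟨he, heB⟩) (hCsub.trans (insert_subset_insert hwin)))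
      constructor
      · rintro ⟨-, hlb⟩
        refine ⟨by rw [heq]; exact Or.inr hbC, fun v hv => ?_⟩
        rw [heq] at hv
        rcases hv with rfl | hv
        · exact hmax b hbE
        · exact hlb hv
      · rintro ⟨-, hlb⟩
        exact ⟨hbC, fun v hv => hlb (by rw [heq]; exact Or.inr hv)⟩
  · have hfund : ∀ v, v ∈ M.E → v ≠ e → v ∉ B →
        fundCct (M ↾ (M.E \ {e})) B v = fundCct M B v := by
      intro v hvE hve hvB
      have hwinv : insert v B ⊆ M.E \ {e} :=
        insert_subset ⟨hvE, hve⟩ hBdel.subset_ground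
      have hsetEq : {C | Cct (M ↾ (M.E \ {e})) C ∧ C ⊆ insert v B} =
          {C | Cct M C ∧ C ⊆ insert v B} := by
        ext C
        simp only [mem_setOf_eq, cct_restrict_iff diff_subset]
        exact ⟨fun h => ⟨h.1.1, h.2⟩, fun h => ⟨⟨h.1, h.2.trans hwinv⟩, h.2⟩⟩
      rw [fundCct, fundCct, hsetEq]
    ext v
    simp only [ActExt, mem_setOf_eq, Matroid.restrict_ground_eq]
    constructor
    · rintro ⟨⟨⟨hvE, hve⟩, hvB⟩, hleast⟩
      rw [hfund v hvE hve hvB] at hleast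
      exact ⟨⟨hvE, hvB⟩, hleast⟩
    · rintro ⟨⟨hvE, hvB⟩, hleast⟩
      have hve : v ≠ e := by
        rintro rfl
        exact max_not_mem_actExt hBM hmax hnl ⟨⟨hvE, hvB⟩, hleast⟩
      rw [← hfund v hvE hve hvB] at hleast
      exact ⟨⟨⟨hvE, hve⟩, hvB⟩, hleast⟩

theorem del_uIntBase [M.Finite] (hmax : ∀ x ∈ M.E, x ≤ e) (hnl : M.Indep {e})
    {B₀ : Set α} (hB₀ : M.IsBase B₀) (heB₀ : e ∉ B₀)
    (h : UIntBase (M ↾ (M.E \ {e})) B) : UIntBase M B := by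
  obtain ⟨hBM, -, hInt, hExt⟩ := del_acts hmax hnl hB₀ heB₀ h.1
  exact ⟨hBM, by rw [← hInt]; exact h.2.1, by rw [← hExt]; exact h.2.2⟩

theorem del_uExtBase [M.Finite] (hmax : ∀ x ∈ M.E, x ≤ e) (hnl : M.Indep {e})
    {B₀ : Set α} (hB₀ : M.IsBase B₀) (heB₀ : e ∉ B₀)
    (h : UExtBase (M ↾ (M.E \ {e})) B) : UExtBase M B := by
  obtain ⟨hBM, -, hInt, hExt⟩ := del_acts hmax hnl hB₀ heB₀ h.1
  exact ⟨hBM, by rw [← hInt]; exact h.2.1, by rw [← hExt]; exact h.2.2⟩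

theorem uIntBase_dual (hBE : B ⊆ M.E) : UIntBase M B ↔ UExtBase M✶ (M.E \ B) := by
  have h1 := actInt_eq_dual M hBE
  have h2 := actExt_eq_dual M hBE
  constructor
  · rintro ⟨hb, hi, he'⟩
    exact ⟨hb.compl_isBase_dual, by rw [← h2]; exact he', by rw [← h1]; exact hi⟩
  · rintro ⟨hb, hi, he'⟩
    refine ⟨?_, by rw [h1]; exact he', by rw [h2]; exact hi⟩
    have hc := hb.compl_isBase_of_dual
    rwa [diff_diff_cancel_left hBE] at hc

theorem uExtBase_dual (hBE : B ⊆ M.E) : UExtBase M B ↔ UIntBase M✶ (M.E \ B) := by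
  have h := uIntBase_dual (M := M✶) (B := M.E \ B) diff_subset
  rw [Matroid.dual_dual, Matroid.dual_ground, diff_diff_cancel_left hBE] at h
  exact h.symm

theorem con_uIntBase [M.Finite] (hmax : ∀ x ∈ M.E, x ≤ e) (hnl : M.Indep {e})
    {B₀ : Set α} (hB₀ : M.IsBase B₀) (heB₀ : e ∉ B₀)
    (h : UIntBase (con M {e}) B) : UIntBase M (insert e B) := by
  have he : e ∈ M.E := hnl.subset_ground rfl
  have hBsub : B ⊆ M.E \ {e} := h.1.subset_ground
  have hdualeq : (con M {e})✶ = M✶ ↾ (M✶.E \ {e}) := by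
    rw [con, Matroid.dual_dual, del]
  have h2 : UExtBase ((con M {e})✶) ((con M {e}).E \ B) :=
    (uIntBase_dual (M := con M {e}) h.1.subset_ground).1 h
  rw [hdualeq] at h2
  have hnl' : M✶.Indep {e} := by
    rw [Matroid.dual_indep_iff_exists (singleton_subset_iff.2 he)]
    exact ⟨B₀, hB₀, disjoint_singleton_left.2 heB₀⟩
  obtain ⟨B₂, hB₂, hsubB₂⟩ := hnl.exists_isBase_superset
  have hB₂' : M✶.IsBase (M.E \ B₂) := hB₂.compl_isBase_dual
  have heB₂' : e ∉ M.E \ B₂ := fun hh => hh.2 (hsubB₂ rfl)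
  haveI : M✶.Finite := Matroid.dual_finite
  have h3 : UExtBase M✶ ((con M {e}).E \ B) :=
    del_uExtBase (M := M✶) hmax hnl' hB₂' heB₂' h2
  have hgr : M.E \ insert e B = (con M {e}).E \ B := by
    rw [con_ground]
    ext v
    simp only [mem_diff, mem_insert_iff, mem_singleton_iff, not_or]
    tauto
  have h4 : UIntBase M (insert e B) ↔ UExtBase M✶ (M.E \ insert e B) :=
    uIntBase_dual (insert_subset he (hBsub.trans diff_subset))
  rw [hgr] at h4
  exact h4.2 h3

end LO
end ActiveBij
namespace ActiveBij

variable {α : Type*} {M : Matroid α} {A B C D I K R S T X Y : Set α} {b e f m w x y z : α}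

theorem conn_nonloop (hConn : Conn M) (hf : f ∈ M.E) (hx : x ∈ M.E) (hxf : x ≠ f) :
    M.Indep {f} := by
  by_contra hind
  have hdep : M.Dep {f} := M.dep_of_not_indep hind (singleton_subset_iff.2 hf)
  rcases hConn.2 hf hx with heq | ⟨C, hC, hfC, hxC⟩
  · exact hxf heq.symm
  · exact hxf ((hC.2 hdep (singleton_subset_iff.2 hfC)) hxC)

theorem conn_singleton {N : Matroid α} (hE : N.E = {f}) : Conn N := by
  refine ⟨⟨f, by rw [hE]; rfl⟩, fun x y hx hy => Or.inl ?_⟩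
  rw [hE] at hx hy
  rw [mem_singleton_iff] at hx hy
  rw [hx, hy]

/-- No circuit through `e` lies (apart from `e`) inside one side of a separation
of `M \ e`. -/
theorem tutte_step1 [M.Finite] (hConn : Conn M) (he : e ∈ M.E)
    (hsplit : ∀ ⦃C⦄, Cct M C → e ∉ C → C ⊆ S ∨ C ⊆ T) (hT : T.Nonempty)
    (hTE : T ⊆ M.E) (heT : e ∉ T) (hdisj : Disjoint S T)
    (hD : Cct M D) (heD : e ∈ D) (hDS : D \ {e} ⊆ S) : False := by
  obtain ⟨a, haT⟩ := hT
  have haE : a ∈ M.E := hTE haT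
  have hae : a ≠ e := fun h => heT (h ▸ haT)
  obtain ⟨D₂, hD₂, heD₂, haD₂⟩ : ∃ D₂, Cct M D₂ ∧ e ∈ D₂ ∧ a ∈ D₂ := by
    rcases hConn.2 he haE with heq | ⟨C, hC, h1, h2⟩
    · exact absurd heq.symm hae
    · exact ⟨C, hC, h1, h2⟩
  have haD : a ∉ D := fun h =>
    hdisj.ne_of_mem (hDS ⟨h, hae⟩) haT rfl
  obtain ⟨F, hF, haF, hFsub⟩ := cct_strong_elim hD₂ hD ⟨heD₂, heD⟩ ⟨haD₂, haD⟩
  have heF : e ∉ F := fun h => (hFsub h).2 rfl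
  have hFT : F ⊆ T := by
    rcases hsplit hF heF with h | h
    · exact absurd rfl (hdisj.ne_of_mem (h haF) haT)
    · exact h
  have hFD₂ : F ⊆ D₂ \ {e} := by
    intro v hv
    obtain ⟨hv1, hv2⟩ := hFsub hv
    rcases hv1 with h | h
    · exact ⟨h, hv2⟩
    · exact absurd rfl (hdisj.ne_of_mem (hDS ⟨h, hv2⟩) (hFT hv))
  exact (hD₂.ssubset_indep
    (hFD₂.trans_ssubset (diff_singleton_ssubset.2 heD₂))).not_dep hF.dep

/-- Tutte's lemma : deleting or contracting any element of a connected matroid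
(with at least two elements) keeps it connected. -/
theorem tutte [M.Finite] (hConn : Conn M) (he : e ∈ M.E)
    (hother : ∃ x ∈ M.E, x ≠ e) :
    Conn (M ↾ (M.E \ {e})) ∨ Conn (con M {e}) := by
  obtain ⟨x₀, hx₀E, hx₀e⟩ := hother
  haveI hNfin : (M ↾ (M.E \ {e})).Finite := Matroid.restrict_finite (M.ground_finite.diff)
  have hnl : M.Indep {e} := conn_nonloop hConn he hx₀E hx₀e
  by_cases hdel : Conn (M ↾ (M.E \ {e}))
  · exact Or.inl hdel
  right
  -- extract a proper separation of M \ e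
  have hground : (M ↾ (M.E \ {e})).E = M.E \ {e} := Matroid.restrict_ground_eq
  have hne' : (M.E \ {e}).Nonempty := ⟨x₀, hx₀E, hx₀e⟩
  obtain ⟨A, hA, hAne, hAE⟩ : ∃ A, Sep (M ↾ (M.E \ {e})) A ∧ A.Nonempty ∧ A ≠ M.E \ {e} := by
    rw [conn_iff_sep, hground] at hdel
    push_neg at hdel
    obtain ⟨A, hA1, hA2, hA3⟩ := hdel hne'
    refine ⟨A, hA1, ?_, hA3⟩
    first
      | exact hA2
      | exact Set.nonempty_iff_ne_empty.2 hA2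
  have hAsub : A ⊆ M.E \ {e} := hA.1
  have hsplit : ∀ ⦃C⦄, Cct M C → e ∉ C → C ⊆ A ∨ C ⊆ (M.E \ {e}) \ A := by
    intro C hC heC
    have hCsub : C ⊆ M.E \ {e} := fun v hv => ⟨hC.subset_ground hv, fun h => heC (h ▸ hv)⟩
    rcases hA.2 ((cct_restrict_iff diff_subset).2 ⟨hC, hCsub⟩) with h | h
    · exact Or.inl h
    · exact Or.inr h
  have hsplit' : ∀ ⦃C⦄, Cct M C → e ∉ C → C ⊆ (M.E \ {e}) \ A ∨ C ⊆ A :=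
    fun C hC heC => (hsplit hC heC).symm
  have hcAne : ((M.E \ {e}) \ A).Nonempty := by
    by_contra h
    rw [Set.not_nonempty_iff_eq_empty, diff_eq_empty] at h
    exact hAE (hAsub.antisymm h)
  have heA : e ∉ A := fun h => (hAsub h).2 rfl
  have hecA : e ∉ (M.E \ {e}) \ A := fun h => h.1.2 rfl
  have hdisj1 : Disjoint A ((M.E \ {e}) \ A) := disjoint_sdiff_right
  have hdisj2 : Disjoint ((M.E \ {e}) \ A) A := disjoint_sdiff_left
  -- no circuit through e is one-sided
  have hkey : ∀ ⦃D⦄, Cct M D → e ∈ D → False → True := fun _ _ _ _ => trivial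
  have honesided : ∀ ⦃D⦄, Cct M D → e ∈ D →
      ¬ (D \ {e} ⊆ A) ∧ ¬ (D \ {e} ⊆ (M.E \ {e}) \ A) := by
    intro D hD heD
    constructor
    · intro hsub
      exact tutte_step1 hConn he hsplit hcAne ((diff_subset).trans diff_subset)
        hecA hdisj1 hD heD hsub
    · intro hsub
      exact tutte_step1 hConn he hsplit' hAne (hAsub.trans diff_subset)
        heA hdisj2 hD heD hsub
  -- e-free circuits are circuits of the contraction
  have hclaimA : ∀ ⦃C⦄, Cct M C → e ∉ C → Cct (con M {e}) C := by
    intro C hC heC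
    have hCsub : C ⊆ M.E \ {e} := fun v hv => ⟨hC.subset_ground hv, fun h => heC (h ▸ hv)⟩
    refine ⟨(con_dep_iff hnl).2 ⟨hCsub, hC.dep.superset (subset_insert _ _)
      (insert_subset he hC.subset_ground)⟩, fun K hK hKC => ?_⟩
    obtain ⟨hKsub, hKdep⟩ := (con_dep_iff hnl).1 hK
    obtain ⟨D, hD, hDsub⟩ := exists_cct_subset hKdep
    by_cases heD : e ∈ D
    · exfalso
      have hDK : D \ {e} ⊆ K := fun v hv => (hDsub hv.1).resolve_left hv.2
      rcases hsplit hC heC with h | h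
      · exact (honesided hD heD).1 (hDK.trans (hKC.trans h))
      · exact (honesided hD heD).2 (hDK.trans (hKC.trans h))
    · have hDK : D ⊆ K := fun v hv => (hDsub hv).resolve_left (fun h => heD (h ▸ hv))
      exact (hC.2 hD.dep (hDK.trans hKC)).trans hDK
  -- circuits through e give circuits of the contraction
  have hclaimB : ∀ ⦃C⦄, Cct M C → e ∈ C → Cct (con M {e}) (C \ {e}) := by
    intro C hC heC
    have hCsub : C \ {e} ⊆ M.E \ {e} := fun v hv => ⟨hC.subset_ground hv.1, hv.2⟩
    refine ⟨(con_dep_iff hnl).2 ⟨hCsub, by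
      rw [insert_diff_singleton, insert_eq_of_mem heC]; exact hC.dep⟩,
      fun K hK hKC => ?_⟩
    obtain ⟨hKsub, hKdep⟩ := (con_dep_iff hnl).1 hK
    obtain ⟨D, hD, hDsub⟩ := exists_cct_subset hKdep
    have hDC : D ⊆ C := hDsub.trans (insert_subset heC (hKC.trans diff_subset))
    have hCD : C ⊆ D := hC.2 hD.dep hDC
    intro v hv
    rcases hDsub (hCD hv.1) with h | h
    · exact absurd h hv.2
    · exact h
  refine ⟨⟨x₀, ⟨hx₀E, hx₀e⟩⟩, fun u v hu hv => ?_⟩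
  have huE : u ∈ M.E := hu.1
  have hvE : v ∈ M.E := hv.1
  rcases hConn.2 huE hvE with heq | ⟨C, hC, huC, hvC⟩
  · exact Or.inl heq
  right
  by_cases heC : e ∈ C
  · exact ⟨C \ {e}, hclaimB hC heC, ⟨huC, hu.2⟩, ⟨hvC, hv.2⟩⟩
  · exact ⟨C, hclaimA hC heC, huC, hvC⟩

end ActiveBij
namespace ActiveBij

variable {α : Type*} {M : Matroid α} {B C D : Set α} {e f v x y : α}

section LO
variable [LinearOrder α]

theorem uIntBase_singleton (hv : M.E = {v}) (hnl : ¬ IsLoopMatroid M) :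
    UIntBase M {v} := by
  have hvE : v ∈ M.E := by rw [hv]; rfl
  have hvind : M.Indep {v} := by
    rw [← M.not_dep_iff (by rw [hv])]
    exact fun hdep => hnl ⟨v, hv, hdep⟩
  have hbase : M.IsBase {v} :=
    hvind.isBase_of_maximal fun J hJ hsub => hsub.antisymm (hv ▸ hJ.subset_ground)
  have hnodual : ¬ M✶.Indep {v} := by
    rw [Matroid.dual_indep_iff_exists (by rw [hv])]
    rintro ⟨Bb, hBb, hdisj⟩
    have hBb0 : Bb = ∅ := by
      rw [eq_empty_iff_forall_notMem]
      intro w hw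
      have : w = v := by
        have := hv ▸ hBb.subset_ground hw
        rwa [mem_singleton_iff] at this
      exact hdisj.ne_of_mem rfl hw this.symm
    rw [hBb0] at hBb
    exact absurd (hBb.eq_of_subset_indep hvind (empty_subset _)).symm
      (Set.singleton_ne_empty v)
  have hco : Cocct M {v} := by
    refine ⟨⟨hnodual, by rw [Matroid.dual_ground, hv]⟩, fun D hD hDv => ?_⟩
    obtain ⟨w, hw⟩ := hD.nonempty
    have : w = v := hDv hw
    exact singleton_subset_iff.2 (this ▸ hw)
  haveI : M.Finite := ⟨by rw [hv]; exact finite_singleton v⟩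
  have heq : fundCocct M {v} v = {v} :=
    fundCocct_eq_of_cocct hbase rfl hco (singleton_subset_iff.2 (mem_insert _ _))
  have hInt : ActInt M {v} = {v} := by
    refine subset_antisymm (actInt_subset M {v}) (singleton_subset_iff.2 ⟨rfl, ?_⟩)
    rw [heq]
    exact ⟨rfl, fun w hw => (mem_singleton_iff.1 hw).ge⟩
  have hExt : ActExt M {v} = ∅ := by
    rw [← subset_empty_iff]
    refine (actExt_subset M {v}).trans ?_
    rw [hv, diff_self]
  refine ⟨hbase, by rw [hInt, Set.ncard_singleton], by rw [hExt, Set.ncard_empty]⟩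

theorem exists_uIntBase_aux :
    ∀ n (M : Matroid α), M.Finite → M.E.ncard = n → Conn M → ¬ IsLoopMatroid M →
      ∃ B, UIntBase M B := by
  intro n
  induction n using Nat.strong_induction_on with
  | _ n IH =>
    intro M hMfin hn hConn hnl
    haveI := hMfin
    rcases eq_or_ne n 0 with rfl | h0
    · obtain ⟨w, hw⟩ := hConn.1
      rw [Set.ncard_eq_zero M.ground_finite] at hn
      exact absurd (hn ▸ hw) (notMem_empty w)
    rcases eq_or_ne n 1 with rfl | h1
    · obtain ⟨v, hv⟩ := Set.ncard_eq_one.1 hn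
      exact ⟨{v}, uIntBase_singleton hv hnl⟩
    have h2 : 1 < M.E.ncard := by rw [hn]; omega
    obtain ⟨e, he, hmax⟩ := Set.exists_max_image M.E id M.ground_finite hConn.1
    obtain ⟨a, b, haE, hbE, hab⟩ := (Set.one_lt_ncard_iff M.ground_finite).1 h2
    have hother : ∃ x ∈ M.E, x ≠ e := by
      rcases eq_or_ne a e with rfl | hae
      · exact ⟨b, hbE, hab.symm⟩
      · exact ⟨a, haE, hae⟩
    obtain ⟨x₀, hx₀E, hx₀e⟩ := hother
    have hnle : M.Indep {e} := conn_nonloop hConn he hx₀E hx₀e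
    -- e is in some circuit, hence not a coloop
    have hecl : e ∈ M.closure (M.E \ {e}) := by
      rcases hConn.2 he hx₀E with heq | ⟨C, hC, heC, hxC⟩
      · exact absurd heq.symm hx₀e
      · have hsubC : C \ {e} ⊆ M.E \ {e} :=
          fun w' hw' => ⟨hC.subset_ground hw'.1, hw'.2⟩
        exact M.closure_subset_closure hsubC (hC.mem_closure_diff_singleton heC)
    obtain ⟨B₀, hB₀, heB₀⟩ := exists_base_not_mem_of_closure hecl
    have hcard : (M.E \ {e}).ncard < n :=
      hn ▸ Set.ncard_diff_singleton_lt_of_mem he M.ground_finite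
    -- the deletion branch
    have delbranch : Conn (M ↾ (M.E \ {e})) → ∃ B, UIntBase M B := by
      intro hdel
      haveI hNfin : (M ↾ (M.E \ {e})).Finite :=
        Matroid.restrict_finite (M.ground_finite.diff)
      have hnl' : ¬ IsLoopMatroid (M ↾ (M.E \ {e})) := by
        rintro ⟨w, hwE, hwdep⟩
        have hwdep' : M.Dep {w} := ((restrict_dep_iff' diff_subset).1 hwdep).1
        have hwE'' : w ∈ (M ↾ (M.E \ {e})).E := by rw [hwE]; rfl
        have hwE' : w ∈ M.E \ {e} := hwE''
        exact (conn_nonloop hConn (hwdep'.subset_ground rfl) he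
          (fun h => hwE'.2 h.symm)).not_dep hwdep'
      obtain ⟨B, hB⟩ := IH _ hcard (M ↾ (M.E \ {e})) hNfin rfl hdel hnl'
      exact ⟨B, del_uIntBase hmax hnle hB₀ heB₀ hB⟩
    by_cases hloopcon : IsLoopMatroid (con M {e})
    · obtain ⟨w, hwE, -⟩ := hloopcon
      have hgr : (M ↾ (M.E \ {e})).E = {w} := by
        show M.E \ {e} = {w}
        rw [← con_ground M {e}]
        exact hwE
      exact delbranch (conn_singleton hgr)
    rcases tutte hConn he ⟨x₀, hx₀E, hx₀e⟩ with hdel | hcon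
    · exact delbranch hdel
    · haveI hconfin : (con M {e}).Finite := ⟨M.ground_finite.diff⟩
      have hcard' : (con M {e}).E.ncard < n := hcard
      obtain ⟨B', hB'⟩ := IH _ hcard' (con M {e}) hconfin rfl hcon hloopcon
      exact ⟨insert e B', con_uIntBase hmax hnle hB₀ heB₀ hB'⟩

theorem uIntBases_finite (M : Matroid α) [M.Finite] : {B | UIntBase M B}.Finite :=
  (M.ground_finite.finite_subsets).subset fun _ h => h.1.subset_ground

theorem uExtBases_finite (M : Matroid α) [M.Finite] : {B | UExtBase M B}.Finite :=
  (M.ground_finite.finite_subsets).subset fun _ h => h.1.subset_ground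

theorem crapoInt (M : Matroid α) [M.Finite] :
    Conn M ∧ ¬ IsLoopMatroid M ↔ beta M ≠ 0 := by
  constructor
  · rintro ⟨hc, hl⟩
    obtain ⟨B, hB⟩ := exists_uIntBase_aux M.E.ncard M ‹M.Finite› rfl hc hl
    intro h0
    rw [beta, Set.ncard_eq_zero (uIntBases_finite M)] at h0
    exact absurd (h0 ▸ hB : B ∈ (∅ : Set (Set α))) (notMem_empty B)
  · intro hb
    obtain ⟨B, hB⟩ := Set.nonempty_of_ncard_ne_zero hb
    exact uIntBase_conn hB

theorem betaStar_eq_beta_dual (M : Matroid α) [M.Finite] : betaStar M = beta M✶ := by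
  have hset : {B | UExtBase M B} = (fun D => M.E \ D) '' {D | UIntBase M✶ D} := by
    ext B
    simp only [mem_setOf_eq, mem_image]
    constructor
    · intro h
      have hBE : B ⊆ M.E := h.1.subset_ground
      exact ⟨M.E \ B, (uExtBase_dual hBE).1 h, diff_diff_cancel_left hBE⟩
    · rintro ⟨D, hD, rfl⟩
      have hDE : D ⊆ M.E := hD.1.subset_ground
      have h := (uExtBase_dual (B := M.E \ D) diff_subset).2
      rw [diff_diff_cancel_left hDE] at h
      exact h hD
  rw [betaStar, beta, hset]
  refine Set.ncard_image_of_injOn ?_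
  intro D₁ h₁ D₂ h₂ hEq
  have hEq' : M.E \ D₁ = M.E \ D₂ := hEq
  have h₁' : D₁ ⊆ M.E := h₁.1.subset_ground
  have h₂' : D₂ ⊆ M.E := h₂.1.subset_ground
  rw [← diff_diff_cancel_left h₁', hEq', diff_diff_cancel_left h₂']

theorem coloopMatroid_iff_dual : IsColoopMatroid M ↔ IsLoopMatroid M✶ := by
  constructor
  · rintro ⟨v, hE, hind⟩
    refine ⟨v, by rw [Matroid.dual_ground, hE], ?_⟩
    refine ⟨?_, by rw [Matroid.dual_ground, hE]⟩
    rw [Matroid.dual_indep_iff_exists (by rw [hE])]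
    rintro ⟨Bb, hBb, hdisj⟩
    have hBb0 : Bb = ∅ := by
      rw [eq_empty_iff_forall_notMem]
      intro w hw
      have hwv : w = v := by
        have := hE ▸ hBb.subset_ground hw
        rwa [mem_singleton_iff] at this
      exact hdisj.ne_of_mem rfl hw hwv.symm
    rw [hBb0] at hBb
    exact absurd (hBb.eq_of_subset_indep hind (empty_subset _)).symm
      (Set.singleton_ne_empty v)
  · rintro ⟨v, hE, hdep⟩
    rw [Matroid.dual_ground] at hE
    refine ⟨v, hE, ?_⟩
    by_contra hind
    obtain ⟨Bb, hBb⟩ := M.exists_isBase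
    have hBbsub : Bb ⊆ {v} := hE ▸ hBb.subset_ground
    have hBbne : Bb ≠ {v} := by
      rintro rfl
      exact hind hBb.indep
    have hBb0 : Bb = ∅ := by
      rcases subset_singleton_iff_eq.1 hBbsub with h | h
      · exact h
      · exact absurd h hBbne
    refine hdep.not_indep ?_
    rw [Matroid.dual_indep_iff_exists (by rw [hE])]
    exact ⟨Bb, hBb, by rw [hBb0]; exact disjoint_empty _⟩

theorem crapoExt (M : Matroid α) [M.Finite] :
    Conn M ∧ ¬ IsColoopMatroid M ↔ betaStar M ≠ 0 := by
  rw [betaStar_eq_beta_dual, ← crapoInt M✶, conn_dual, coloopMatroid_iff_dual]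

end LO
end ActiveBij
namespace ActiveBij

variable {α : Type*} {M : Matroid α}

theorem chain_le_last {n : ℕ} {g : Fin (n + 1) → Set α}
    (hchain : ∀ k : Fin n, g k.castSucc ⊆ g k.succ) (j : Fin (n + 1)) :
    g j ⊆ g (Fin.last n) := by
  have aux : ∀ d t (h : t < n + 1), n - t = d →
      g ⟨t, h⟩ ⊆ g (Fin.last n) := by
    intro d
    induction d with
    | zero =>
      intro t h hd
      have ht : t = n := by omega
      subst ht
      exact subset_of_eq (congrArg g (Fin.ext rfl))
    | succ d IH =>
      intro t h hd
      have ht : t < n := by omega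
      have step : g ⟨t, h⟩ ⊆ g ⟨t + 1, by omega⟩ := by
        have hs := hchain ⟨t, ht⟩
        have e1 : (⟨t, ht⟩ : Fin n).castSucc = ⟨t, h⟩ := Fin.ext rfl
        have e2 : (⟨t, ht⟩ : Fin n).succ = ⟨t + 1, by omega⟩ := Fin.ext rfl
        rwa [e1, e2] at hs
      exact step.trans (IH (t + 1) (by omega) (by omega))
  have h := aux (n - j.val) j.val j.isLt rfl
  have hj : (⟨j.val, j.isLt⟩ : Fin (n + 1)) = j := Fin.ext rfl
  rwa [hj] at h

theorem chain_le_zero {n : ℕ} {g : Fin (n + 1) → Set α}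
    (hchain : ∀ k : Fin n, g k.succ ⊆ g k.castSucc) (j : Fin (n + 1)) :
    g j ⊆ g 0 := by
  have aux : ∀ t (h : t < n + 1), g ⟨t, h⟩ ⊆ g 0 := by
    intro t
    induction t with
    | zero =>
      intro h
      exact subset_of_eq (congrArg g (Fin.ext rfl))
    | succ t IH =>
      intro h
      have ht : t < n := by omega
      have step : g ⟨t + 1, h⟩ ⊆ g ⟨t, by omega⟩ := by
        have hs := hchain ⟨t, ht⟩
        have e1 : (⟨t, ht⟩ : Fin n).castSucc = ⟨t, by omega⟩ := Fin.ext rfl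
        have e2 : (⟨t, ht⟩ : Fin n).succ = ⟨t + 1, h⟩ := Fin.ext rfl
        rwa [e1, e2] at hs
      exact step.trans (IH (by omega))
  have h := aux j.val j.isLt
  have hj : (⟨j.val, j.isLt⟩ : Fin (n + 1)) = j := Fin.ext rfl
  rwa [hj] at h

theorem minor_ground (M : Matroid α) (G F : Set α) : (minor M G F).E = G \ F := rfl

section Filt
variable [LinearOrder α] {f : Filtration α}

theorem isFiltration_F_subset (hf : IsFiltration M f) (j : Fin (f.ι + 1)) :
    f.F j ⊆ M.E := by
  have h := chain_le_last (fun k => (hf.2.2.2.1 k).subset) j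
  rwa [hf.2.2.1] at h

theorem isFiltration_F'_subset (hf : IsFiltration M f) (j : Fin (f.ε + 1)) :
    f.F' j ⊆ M.E := by
  have h := chain_le_zero (fun k => (hf.2.2.2.2.1 k).subset) j
  rw [hf.2.1] at h
  exact h.trans (isFiltration_F_subset hf 0)

theorem intMinor_finite [M.Finite] (hf : IsFiltration M f) (k : Fin f.ι) :
    (intMinor M f k).Finite :=
  ⟨(M.ground_finite.subset (isFiltration_F_subset hf k.succ)).subset
    ((minor_ground _ _ _).le.trans diff_subset)⟩

theorem extMinor_finite [M.Finite] (hf : IsFiltration M f) (k : Fin f.ε) :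
    (extMinor M f k).Finite :=
  ⟨(M.ground_finite.subset (isFiltration_F'_subset hf k.castSucc)).subset
    ((minor_ground _ _ _).le.trans diff_subset)⟩

end Filt
end ActiveBij

namespace ActiveBij

/-- A filtration is connected iff the product of the beta invariants of its induced
internal minors and of the dual beta invariants of its induced external minors is nonzero. -/
theorem stmt8 {α : Type*} [LinearOrder α] (M : Matroid α) [M.Finite]
    (f : Filtration α) (hf : IsFiltration M f) :
    IsConnFiltration M f ↔
      (∏ k : Fin f.ι, beta (intMinor M f k)) *
        (∏ k : Fin f.ε, betaStar (extMinor M f k)) ≠ 0 := by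
  have hcrapoI : ∀ k : Fin f.ι,
      (Conn (intMinor M f k) ∧ ¬ IsLoopMatroid (intMinor M f k)) ↔
        beta (intMinor M f k) ≠ 0 := by
    intro k
    haveI := intMinor_finite hf k
    exact crapoInt _
  have hcrapoE : ∀ k : Fin f.ε,
      (Conn (extMinor M f k) ∧ ¬ IsColoopMatroid (extMinor M f k)) ↔
        betaStar (extMinor M f k) ≠ 0 := by
    intro k
    haveI := extMinor_finite hf k
    exact crapoExt _
  constructor
  · rintro ⟨-, hint, hext⟩
    refine mul_ne_zero ?_ ?_
    · exact Finset.prod_ne_zero_iff.2 fun k _ => (hcrapoI k).1 (hint k)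
    · exact Finset.prod_ne_zero_iff.2 fun k _ => (hcrapoE k).1 (hext k)
  · intro h
    obtain ⟨h1, h2⟩ := mul_ne_zero_iff.1 h
    exact ⟨hf,
      fun k => (hcrapoI k).2 (Finset.prod_ne_zero_iff.1 h1 k (Finset.mem_univ k)),
      fun k => (hcrapoE k).2 (Finset.prod_ne_zero_iff.1 h2 k (Finset.mem_univ k))⟩

end ActiveBij
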